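/- In the normal-form setting below, set f_j(t) = |μ_j(t)|², f = f_1 + … + f_K and h = Σ_{l=1}^{K} 2^{-l} f_l. Then at the point t: (i) d/dt (f_0 + f) ≤ 2(K+1) · max_{0≤l≤K} |conj(μ_l(t)) g_l(t)|; and (ii) d/dt (f_0 + h) ≥ −2(K+1) · max_{0≤l≤K} |conj(μ_l(t)) g_l(t)|. -/

import Mathlib

open Finset

private lemma normSq_hasDerivAt' {f : ℝ → ℂ} {f' : ℂ} {t : ℝ} (hf : HasDerivAt f f' t) :
    HasDerivAt (fun s => ‖f s‖ ^ 2) (2 * ((starRingEnd ℂ) (f t) * f').re) t := by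
  have hre : HasDerivAt (fun s => (f s).re) f'.re t := by
    exact (Complex.reCLM.hasFDerivAt.comp_hasDerivAt t hf)
  have him : HasDerivAt (fun s => (f s).im) f'.im t := by
    exact (Complex.imCLM.hasFDerivAt.comp_hasDerivAt t hf)
  have h := (hre.mul hre).add (him.mul him)
  have heq : (fun s => ‖f s‖ ^ 2) = fun s => (f s).re * (f s).re + (f s).im * (f s).im := by
    funext s
    rw [Complex.sq_norm, Complex.normSq_apply]
  rw [heq]
  refine h.congr_deriv ?_
  simp only [Complex.mul_re, Complex.conj_re, Complex.conj_im]
  ring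

theorem stmt17 (K : ℕ) (hK : 1 ≤ K)
    (γ : Fin (K + 1) → Fin (K + 1) → Fin (K + 1) → ℝ)
    (hγnonneg : ∀ a b l, 0 ≤ γ a b l)
    (hγvanish : ∀ a b l : Fin (K + 1), ¬(l < a ∧ l < b) → γ a b l = 0)
    (c : Fin (K + 1) → Fin (K + 1) → ℂ) (hc : ∀ l j, (c l j).re = 0)
    (d : Fin (K + 1) → Fin (K + 1) → Fin (K + 1) → ℂ)
    (hd : ∀ a b j, (d a b j).re =
      (2 - if a = b then (1 : ℝ) else 0) * γ a b j
        - 2 * (2 - if j = b then (1 : ℝ) else 0) * γ j b a)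
    (t : ℝ) (μ : Fin (K + 1) → ℝ → ℂ) (g : Fin (K + 1) → ℂ)
    (hμ : ∀ j, HasDerivAt (μ j)
      ((∑ l, c l j * (‖μ l t‖ : ℂ) ^ 2) * μ j t
        + (∑ a, ∑ b, d a b j * (‖μ a t‖ : ℂ) ^ 2 * (‖μ b t‖ : ℂ) ^ 2) * μ j t + g j) t) :
    deriv (fun s => ‖μ 0 s‖ ^ 2 + ∑ l : Fin K, ‖μ l.succ s‖ ^ 2) t
      ≤ 2 * ((K : ℝ) + 1) *
          (Finset.univ.sup' Finset.univ_nonempty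
            fun l : Fin (K + 1) => ‖(starRingEnd ℂ) (μ l t) * g l‖) ∧
    -(2 * ((K : ℝ) + 1) *
          (Finset.univ.sup' Finset.univ_nonempty
            fun l : Fin (K + 1) => ‖(starRingEnd ℂ) (μ l t) * g l‖))
      ≤ deriv (fun s => ‖μ 0 s‖ ^ 2
          + ∑ l : Fin K, ((2 : ℝ) ^ (l.val + 1))⁻¹ * ‖μ l.succ s‖ ^ 2) t := by
  classical
  set M : ℝ := Finset.univ.sup' Finset.univ_nonempty
      (fun l : Fin (K + 1) => ‖(starRingEnd ℂ) (μ l t) * g l‖) with hM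
  set F : Fin (K + 1) → ℝ := fun l => ‖μ l t‖ ^ 2 with hFdef
  have hFnonneg : ∀ l, 0 ≤ F l := fun l => by rw [hFdef]; positivity
  set G : Fin (K + 1) → ℝ := fun j => ((starRingEnd ℂ) (μ j t) * g j).re with hGdef
  set R : Fin (K + 1) → ℝ := fun j => ∑ a, ∑ b, (d a b j).re * F a * F b with hRdef
  set D : Fin (K + 1) → ℝ := fun j => 2 * (R j * F j + G j) with hDdef
  have hcast : ∀ l : Fin (K + 1), ((‖μ l t‖ : ℂ)) ^ 2 = ((F l : ℝ) : ℂ) := by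
    intro l; rw [hFdef]; push_cast; ring
  have hz : ∀ j, (starRingEnd ℂ) (μ j t) * μ j t = ((F j : ℝ) : ℂ) := by
    intro j
    rw [mul_comm, Complex.mul_conj]
    norm_cast
    simp [hFdef, Complex.normSq_eq_norm_sq]
  have hmain : ∀ j, 2 * ((starRingEnd ℂ) (μ j t) *
      ((∑ l, c l j * (‖μ l t‖ : ℂ) ^ 2) * μ j t
        + (∑ a, ∑ b, d a b j * (‖μ a t‖ : ℂ) ^ 2 * (‖μ b t‖ : ℂ) ^ 2) * μ j t + g j)).re
        = D j := by
    intro j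
    have hexp : (starRingEnd ℂ) (μ j t) *
      ((∑ l, c l j * (‖μ l t‖ : ℂ) ^ 2) * μ j t
        + (∑ a, ∑ b, d a b j * (‖μ a t‖ : ℂ) ^ 2 * (‖μ b t‖ : ℂ) ^ 2) * μ j t + g j)
        = (∑ l, c l j * ((F l : ℝ) : ℂ)) * ((F j : ℝ) : ℂ)
          + (∑ a, ∑ b, d a b j * ((F a : ℝ) : ℂ) * ((F b : ℝ) : ℂ)) * ((F j : ℝ) : ℂ)
          + (starRingEnd ℂ) (μ j t) * g j := by
      simp_rw [hcast]
      rw [← hz j]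
      ring
    rw [hexp]
    simp only [Complex.add_re, Complex.mul_re, Complex.ofReal_re, Complex.ofReal_im,
      Complex.re_sum, Complex.im_sum, hc, mul_zero, zero_mul, sub_zero, zero_sub, neg_zero,
      Finset.sum_const_zero, zero_add]
    simp only [hDdef, hRdef, hGdef, Complex.mul_re]
  have hD : ∀ j, HasDerivAt (fun s => ‖μ j s‖ ^ 2) (D j) t := fun j => by
    have h := normSq_hasDerivAt' (hμ j)
    rwa [hmain j] at h
  -- derivatives of the two combined functions
  have h1 : HasDerivAt (fun s => ‖μ 0 s‖ ^ 2 + ∑ l : Fin K, ‖μ l.succ s‖ ^ 2)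
      (∑ j, D j) t := by
    rw [Fin.sum_univ_succ]
    exact (hD 0).add (HasDerivAt.fun_sum (fun (l : Fin K) _ => hD l.succ))
  set w : Fin (K + 1) → ℝ := fun j => ((2 : ℝ) ^ (j : ℕ))⁻¹ with hwdef
  have h2 : HasDerivAt (fun s => ‖μ 0 s‖ ^ 2
      + ∑ l : Fin K, ((2 : ℝ) ^ (l.val + 1))⁻¹ * ‖μ l.succ s‖ ^ 2)
      (∑ j, w j * D j) t := by
    have h := (hD 0).add
      (HasDerivAt.fun_sum (fun (l : Fin K) (_ : l ∈ univ) =>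
        ((hD l.succ).const_mul (((2 : ℝ) ^ (l.val + 1))⁻¹))))
    refine h.congr_deriv ?_
    rw [Fin.sum_univ_succ]
    simp [hwdef, Fin.val_succ]
  -- bounds on G
  have hMnonneg : 0 ≤ M := le_trans (norm_nonneg ((starRingEnd ℂ) (μ 0 t) * g 0))
    (Finset.le_sup' (fun l : Fin (K + 1) => ‖(starRingEnd ℂ) (μ l t) * g l‖)
      (Finset.mem_univ (0 : Fin (K + 1))))
  have hGabs : ∀ j, |G j| ≤ M := fun j => by
    refine le_trans ?_ (Finset.le_sup' (fun l : Fin (K + 1) =>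
      ‖(starRingEnd ℂ) (μ l t) * g l‖) (Finset.mem_univ j))
    rw [hGdef]
    calc |((starRingEnd ℂ) (μ j t) * g j).re| ≤ ‖(starRingEnd ℂ) (μ j t) * g j‖ :=
        Complex.abs_re_le_norm _
      _ = ‖(starRingEnd ℂ) (μ j t) * g j‖ := rfl
  -- key algebraic identity
  have hkey : ∀ v : Fin (K + 1) → ℝ,
      ∑ j, v j * (R j * F j)
        = ∑ j, ∑ a, ∑ b, (2 - if a = b then (1 : ℝ) else 0) * γ a b j
            * (F a * F b * F j) * (v j - 2 * v a) := by
    intro v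
    have e1 : ∑ j, v j * (R j * F j)
        = ∑ j, ∑ a, ∑ b,
            ((2 - if a = b then (1 : ℝ) else 0) * γ a b j * (F a * F b * F j) * v j
            - 2 * (2 - if j = b then (1 : ℝ) else 0) * γ j b a * (F a * F b * F j) * v j) := by
      simp only [hRdef, Finset.sum_mul, Finset.mul_sum]
      refine Finset.sum_congr rfl fun j _ => Finset.sum_congr rfl fun a _ =>
        Finset.sum_congr rfl fun b _ => ?_
      rw [hd]; ring
    rw [e1]
    simp only [Finset.sum_sub_distrib]
    have e2 : ∑ j, ∑ a, ∑ b,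
          2 * (2 - if j = b then (1 : ℝ) else 0) * γ j b a * (F a * F b * F j) * v j
        = ∑ j, ∑ a, ∑ b,
          2 * (2 - if a = b then (1 : ℝ) else 0) * γ a b j * (F j * F b * F a) * v a := by
      rw [Finset.sum_comm]
    rw [e2, ← Finset.sum_sub_distrib]
    refine Finset.sum_congr rfl fun j _ => ?_
    rw [← Finset.sum_sub_distrib]
    refine Finset.sum_congr rfl fun a _ => ?_
    rw [← Finset.sum_sub_distrib]
    refine Finset.sum_congr rfl fun b _ => ?_
    ring
  have hδ : ∀ a b : Fin (K + 1), 0 ≤ 2 - (if a = b then (1 : ℝ) else 0) := by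
    intro a b; split <;> norm_num
  constructor
  · -- part (i)
    rw [h1.deriv]
    have hsplit : ∑ j, D j = 2 * ∑ j, (1 : ℝ) * (R j * F j) + 2 * ∑ j, G j := by
      rw [Finset.mul_sum, Finset.mul_sum, ← Finset.sum_add_distrib]
      refine Finset.sum_congr rfl fun j _ => ?_
      rw [hDdef]; ring
    have hRF : ∑ j, (1 : ℝ) * (R j * F j) ≤ 0 := by
      rw [hkey (fun _ => 1)]
      refine Finset.sum_nonpos fun j _ => Finset.sum_nonpos fun a _ =>
        Finset.sum_nonpos fun b _ => ?_
      have hnn : 0 ≤ (2 - if a = b then (1 : ℝ) else 0) * γ a b j * (F a * F b * F j) :=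
        mul_nonneg (mul_nonneg (hδ a b) (hγnonneg a b j))
          (mul_nonneg (mul_nonneg (hFnonneg a) (hFnonneg b)) (hFnonneg j))
      nlinarith
    have hGsum : ∑ j, G j ≤ ((K : ℝ) + 1) * M := by
      calc ∑ j, G j ≤ ∑ _j : Fin (K + 1), M :=
          Finset.sum_le_sum fun j _ => (abs_le.1 (hGabs j)).2
        _ = ((K : ℝ) + 1) * M := by
          rw [Finset.sum_const, Finset.card_univ, Fintype.card_fin, nsmul_eq_mul]
          push_cast; ring
    rw [hsplit]
    linarith
  · -- part (ii)
    rw [h2.deriv]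
    have hsplit : ∑ j, w j * D j = 2 * ∑ j, w j * (R j * F j) + 2 * ∑ j, w j * G j := by
      rw [Finset.mul_sum, Finset.mul_sum, ← Finset.sum_add_distrib]
      refine Finset.sum_congr rfl fun j _ => ?_
      rw [hDdef]; ring
    have hw0 : ∀ j, 0 ≤ w j := fun j => by rw [hwdef]; positivity
    have hw1 : ∀ j, w j ≤ 1 := fun j => by
      simp only [hwdef]
      rw [inv_le_one_iff₀]
      right
      exact one_le_pow₀ (by norm_num)
    have hWRF : 0 ≤ ∑ j, w j * (R j * F j) := by
      rw [hkey w]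
      refine Finset.sum_nonneg fun j _ => Finset.sum_nonneg fun a _ =>
        Finset.sum_nonneg fun b _ => ?_
      by_cases hγ0 : γ a b j = 0
      · simp [hγ0]
      · have hlt : j < a ∧ j < b := by
          by_contra hcon
          exact hγ0 (hγvanish a b j hcon)
        have hja : (j : ℕ) < (a : ℕ) := hlt.1
        have hwja : 2 * w a ≤ w j := by
          simp only [hwdef]
          have hpa : (0 : ℝ) < 2 ^ (a : ℕ) := by positivity
          have hpj : (0 : ℝ) < 2 ^ (j : ℕ) := by positivity
          rw [inv_eq_one_div, inv_eq_one_div, mul_one_div, div_le_div_iff₀ hpa hpj]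
          calc (2:ℝ) * 2 ^ (j : ℕ) = 2 ^ ((j : ℕ) + 1) := by rw [pow_succ]; ring
            _ ≤ 2 ^ (a : ℕ) := pow_le_pow_right₀ (by norm_num) hja
            _ = 1 * 2 ^ (a : ℕ) := (one_mul _).symm
        have hnn : 0 ≤ (2 - if a = b then (1 : ℝ) else 0) * γ a b j * (F a * F b * F j) :=
          mul_nonneg (mul_nonneg (hδ a b) (hγnonneg a b j))
            (mul_nonneg (mul_nonneg (hFnonneg a) (hFnonneg b)) (hFnonneg j))
        have : 0 ≤ w j - 2 * w a := by linarith
        exact mul_nonneg hnn this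
    have hGlb : -(((K : ℝ) + 1) * M) ≤ ∑ j, w j * G j := by
      have hterm : ∀ j ∈ (univ : Finset (Fin (K + 1))), -M ≤ w j * G j := by
        intro j _
        have h1' : -M ≤ G j := (abs_le.1 (hGabs j)).1
        nlinarith [hw0 j, hw1 j, hMnonneg]
      calc -(((K : ℝ) + 1) * M) = ∑ _j : Fin (K + 1), (-M) := by
            rw [Finset.sum_const, Finset.card_univ, Fintype.card_fin, nsmul_eq_mul]
            push_cast; ring
        _ ≤ ∑ j, w j * G j := Finset.sum_le_sum hterm
    rw [hsplit]
    linarith
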